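/- arXiv:2504.20875 — 2 statements merged into one kernel-verified Lean document; each statement's English description precedes it below -/
import Mathlib

section
/- For integers a, b, k with k ≥ b > a ≥ 1, m ≥ 1 and 0 ≤ h ≤ m−1: Σ_{λ ∈ BD_{a,b,k}(m,h,a)} u^{ℓ_a(λ)} v^{ℓ_b(λ)} q^{|λ|} = u^{m−h} v^{h} q^{k·C(m,2) + k·C(h+1,2) + ma + (b−a)h} [m−1 choose h]_k, and Σ_{λ ∈ BD_{a,b,k}(m,h,b)} u^{ℓ_a(λ)} v^{ℓ_b(λ)} q^{|λ|} = u^{m−h−1} v^{h+1} q^{k·C(m,2) + k·C(h+1,2) + ma + (b−a)(h+1)} [m−1 choose h]_k. -/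
/-- The finite q-Pochhammer symbol `(t;q)_n = ∏_{i=0}^{n-1} (1 - t qⁱ)`. -/
noncomputable def qPoch (t q : ℂ) (n : ℕ) : ℂ := ∏ i ∈ Finset.range n, (1 - t * q ^ i)

/-- The infinite q-Pochhammer symbol `(t;q)_∞ = ∏_{i≥0} (1 - t qⁱ)`. -/
noncomputable def qPochInf (t q : ℂ) : ℂ := ∏' i : ℕ, (1 - t * q ^ i)

/-- The Gaussian binomial coefficient `[A choose B]` in base `q`:
`(q;q)_A / ((q;q)_B (q;q)_{A-B})` for `A ≥ B ≥ 0`, and `0` otherwise. -/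
noncomputable def gbinom (q : ℂ) (A B : ℕ) : ℂ :=
  if B ≤ A then qPoch q q A / (qPoch q q B * qPoch q q (A - B)) else 0

/-- `lcount k c l` is the number of parts of `l` congruent to `c` modulo `k`. -/
def lcount (k c : ℕ) (l : List ℕ) : ℕ := (l.filter (fun x => x % k = c % k)).length

/-- Membership in `BD_{a,b,k}(m)`: partitions `(λ_1,…,λ_m)` with exactly `m` parts, each
`≡ a` or `b (mod k)`, `λ_m ∈ {a, b}`, and for consecutive parts:
`λ_i - λ_{i+1} ≥ k` with strict inequality if `λ_i ≡ b (mod k)`, and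
`λ_i - λ_{i+1} ≤ 2k` with strict inequality if `λ_{i+1} ≡ a (mod k)`. -/
def memBD (a b k m : ℕ) (l : List ℕ) : Prop :=
  l.Pairwise (· ≥ ·) ∧ l.length = m ∧
    (∀ x ∈ l, 0 < x ∧ (x % k = a % k ∨ x % k = b % k)) ∧
    (l.getLast? = some a ∨ l.getLast? = some b) ∧
    l.Chain' (fun x y => (y + k ≤ x ∧ (x % k = b % k → y + k < x)) ∧
      (x ≤ y + 2 * k ∧ (y % k = a % k → x < y + 2 * k)))

section Helpers

private lemma qPoch_zero' (t q : ℂ) : qPoch t q 0 = 1 := by simp [qPoch]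

private lemma qPoch_succ' (t q : ℂ) (n : ℕ) :
    qPoch t q (n + 1) = qPoch t q n * (1 - t * q ^ n) := Finset.prod_range_succ _ _

private lemma qPoch_ne {Q : ℂ} (hQ : ∀ i : ℕ, 1 - Q * Q ^ i ≠ 0) (n : ℕ) :
    qPoch Q Q n ≠ 0 :=
  Finset.prod_ne_zero_iff.mpr fun i _ => hQ i

private lemma gbinom_zero {Q : ℂ} (hQ : ∀ i : ℕ, 1 - Q * Q ^ i ≠ 0) (n : ℕ) :
    gbinom Q n 0 = 1 := by
  rw [gbinom, if_pos (Nat.zero_le n), Nat.sub_zero, qPoch_zero', one_mul,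
    div_self (qPoch_ne hQ n)]

private lemma gbinom_pascal {Q : ℂ} (hQ : ∀ i : ℕ, 1 - Q * Q ^ i ≠ 0) (n t : ℕ) :
    gbinom Q (n + 1) (t + 1) = Q ^ (t + 1) * gbinom Q n (t + 1) + gbinom Q n t := by
  rcases lt_trichotomy n t with hlt | rfl | hgt
  · rw [gbinom, if_neg (by omega), gbinom, if_neg (by omega), gbinom, if_neg (by omega)]
    ring
  · rw [gbinom, if_pos le_rfl, gbinom, if_neg (by omega), Nat.sub_self, gbinom,
      if_pos le_rfl, Nat.sub_self, qPoch_zero', mul_one, mul_one,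
      div_self (qPoch_ne hQ _), div_self (qPoch_ne hQ _)]
    ring
  · obtain ⟨e, rfl⟩ : ∃ e, n = t + 1 + e := ⟨n - (t + 1), by omega⟩
    rw [gbinom, if_pos (by omega), gbinom, if_pos (by omega), gbinom, if_pos (by omega),
      show t + 1 + e + 1 - (t + 1) = e + 1 by omega, show t + 1 + e - (t + 1) = e by omega,
      show t + 1 + e - t = e + 1 by omega,
      qPoch_succ' Q Q (t + 1 + e), qPoch_succ' Q Q e, qPoch_succ' Q Q t]
    have h1 := qPoch_ne hQ (t + 1 + e)
    have h2 := qPoch_ne hQ e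
    have h3 := qPoch_ne hQ t
    have h4 := hQ e
    have h5 := hQ t
    field_simp
    ring

end Helpers
section ListHelpers

variable {a b k : ℕ}

private lemma abne (ha : 1 ≤ a) (hab : a < b) (hbk : b ≤ k) : a % k ≠ b % k := by
  rcases eq_or_lt_of_le hbk with rfl | hlt
  · rw [Nat.mod_self, Nat.mod_eq_of_lt (by omega)]; omega
  · rw [Nat.mod_eq_of_lt (by omega), Nat.mod_eq_of_lt hlt]; omega

private lemma repr_a (ha : 1 ≤ a) (hab : a < b) (hbk : b ≤ k) {y : ℕ}
    (hy : y % k = a % k) : ∃ j, y = k * j + a := by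
  refine ⟨y / k, ?_⟩
  conv_lhs => rw [← Nat.div_add_mod y k]
  rw [hy, Nat.mod_eq_of_lt (by omega)]

private lemma repr_b (ha : 1 ≤ a) (hab : a < b) (hbk : b ≤ k) {y : ℕ} (h0 : 0 < y)
    (hy : y % k = b % k) : ∃ j, y = k * j + b := by
  rcases eq_or_lt_of_le hbk with rfl | hlt
  · have hb0 : y % b = 0 := by rw [hy, Nat.mod_self]
    have hd : b * (y / b) = y := Nat.mul_div_cancel' (Nat.dvd_of_mod_eq_zero hb0)
    have h1 : 1 ≤ y / b := by
      rcases Nat.eq_zero_or_pos (y / b) with h | h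
      · rw [h, Nat.mul_zero] at hd; omega
      · exact h
    refine ⟨y / b - 1, ?_⟩
    have h2 : b * (y / b) = b * (y / b - 1) + b := by
      rw [← Nat.mul_succ]; congr 1; omega
    linarith [hd, h2]
  · refine ⟨y / k, ?_⟩
    have h3 := Nat.div_add_mod y k
    rw [hy, Nat.mod_eq_of_lt hlt] at h3
    linarith

private lemma sorted_head_le {t : List ℕ} (hs : t.Pairwise (· ≥ ·)) {y : ℕ}
    (hy : t.head? = some y) : ∀ z ∈ t, z ≤ y := by
  cases t with
  | nil => simp at hy
  | cons w t2 =>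
    simp only [List.head?_cons, Option.some_inj] at hy
    subst hy
    intro z hz
    rcases List.mem_cons.1 hz with rfl | hz
    · exact le_refl _
    · exact (List.pairwise_cons.1 hs).1 z hz

private lemma getLast?_cons_ne {x : ℕ} {t : List ℕ} (ht : t ≠ []) :
    (x :: t).getLast? = t.getLast? := by
  cases t with
  | nil => exact absurd rfl ht
  | cons y t2 => exact List.getLast?_cons_cons

private lemma memBD_tail {m x : ℕ} {t : List ℕ} (ht : t ≠ [])
    (H : memBD a b k (m + 1) (x :: t)) : memBD a b k m t := by
  obtain ⟨hs, hl, hp, hlast, hc⟩ := H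
  refine ⟨hs.of_cons, by simp at hl; omega,
    fun z hz => hp z (List.mem_cons_of_mem _ hz), ?_, by exact hc.tail⟩
  rwa [getLast?_cons_ne ht] at hlast

private lemma memBD_head_ge (ha : 1 ≤ a) (hab : a < b) (hbk : b ≤ k) :
    ∀ (l : List ℕ) (m : ℕ), memBD a b k m l → ∀ x, l.head? = some x →
      k * (m - 1) + a ≤ x := by
  intro l
  induction l with
  | nil => intro m H x hx; simp at hx
  | cons w t ih =>
    intro m H x hx
    simp only [List.head?_cons, Option.some_inj] at hx
    subst hx
    cases t with
    | nil =>
      have hm1 : m = 1 := by have := H.2.1; simpa using this.symm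
      subst hm1
      have hw : w = a ∨ w = b := by
        rcases H.2.2.2.1 with h' | h' <;> simp at h' <;> omega
      simp only [Nat.sub_self, Nat.mul_zero, Nat.zero_add]
      omega
    | cons y t2 =>
      have hm2 : 2 ≤ m := by have := H.2.1; simp at this; omega
      have H' : memBD a b k (m - 1 + 1) (w :: y :: t2) := by
        rwa [show m - 1 + 1 = m by omega]
      have Ht : memBD a b k (m - 1) (y :: t2) := memBD_tail (by simp) H'
      have hy := ih (m - 1) Ht y rfl
      have hch : y + k ≤ w := (List.isChain_cons_cons.1 H.2.2.2.2).1.1.1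
      have hy' : k * (m - 2) + a ≤ y := by rwa [show m - 1 - 1 = m - 2 by omega] at hy
      have hmul : k * (m - 1) = k * (m - 2) + k := by
        rw [show m - 1 = (m - 2) + 1 by omega, Nat.mul_succ]
      linarith

private lemma memBD_one (ha : 1 ≤ a) (hab : a < b) (hbk : b ≤ k) {l : List ℕ} :
    memBD a b k 1 l ↔ l = [a] ∨ l = [b] := by
  constructor
  · rintro ⟨hs, hl, hp, hlast, hc⟩
    obtain ⟨x, rfl⟩ := List.length_eq_one_iff.mp hl
    rcases hlast with h' | h' <;> simp at h'
    · left; rw [h']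
    · right; rw [h']
  · rintro (rfl | rfl)
    · refine ⟨List.pairwise_singleton _ _, rfl, ?_, Or.inl (by simp), List.isChain_singleton _⟩
      intro x hx; simp at hx; subst hx; exact ⟨by omega, Or.inl rfl⟩
    · refine ⟨List.pairwise_singleton _ _, rfl, ?_, Or.inr (by simp), List.isChain_singleton _⟩
      intro x hx; simp at hx; subst hx; exact ⟨by omega, Or.inr rfl⟩

private lemma lcount_cons (c x : ℕ) (l : List ℕ) :
    lcount k c (x :: l) = (if x % k = c % k then 1 else 0) + lcount k c l := by
  by_cases hx : x % k = c % k <;> simp [lcount, List.filter_cons, hx, Nat.add_comm]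

end ListHelpers
section Decomp

variable {a b k : ℕ}

private lemma BD_decomp (ha : 1 ≤ a) (hab : a < b) (hbk : b ≤ k) {m : ℕ} (hm : 1 ≤ m)
    (h r₁ : ℕ) (hr : r₁ = a ∨ r₁ = b) :
    {l : List ℕ | memBD a b k (m + 1) l ∧ l.head? = some (k * h + k * m + r₁)} =
      (fun t => (k * h + k * m + r₁) :: t) ''
        ({t : List ℕ | memBD a b k m t ∧ t.head? = some (k * h + k * (m - 1) + a)} ∪
         {t : List ℕ | memBD a b k m t ∧ 1 ≤ h ∧
            t.head? = some (k * (h - 1) + k * (m - 1) + b)}) := by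
  obtain ⟨m', rfl⟩ : ∃ m', m = m' + 1 := ⟨m - 1, by omega⟩
  simp only [Nat.add_sub_cancel]
  have hane : a % k ≠ b % k := abne ha hab hbk
  have hk0 : 0 < k := by omega
  have hXmod : (k * h + k * (m' + 1) + r₁) % k = r₁ % k := by
    rw [← Nat.mul_add, Nat.mul_add_mod]
  set X := k * h + k * (m' + 1) + r₁ with hX
  have hXval : X = k * (h + m' + 1) + r₁ := by rw [hX]; ring
  ext l
  simp only [Set.mem_setOf_eq, Set.mem_image, Set.mem_union]
  constructor
  · rintro ⟨H, hhead⟩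
    cases l with
    | nil => simp at hhead
    | cons x t =>
      simp only [List.head?_cons, Option.some_inj] at hhead
      subst hhead
      have hlt : t.length = m' + 1 := by have := H.2.1; simp at this; omega
      have htne : t ≠ [] := by intro h0; rw [h0] at hlt; simp at hlt
      have Ht : memBD a b k (m' + 1) t := memBD_tail htne H
      cases t with
      | nil => exact absurd rfl htne
      | cons y t2 =>
        obtain ⟨⟨hge, hgeb⟩, hle, hlea⟩ := (List.isChain_cons_cons.1 H.2.2.2.2).1
        have hy0 := H.2.2.1 y (by simp)
        have hymin : k * m' + a ≤ y := by
          have := memBD_head_ge ha hab hbk _ _ Ht y rfl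
          rwa [Nat.add_sub_cancel] at this
        refine ⟨y :: t2, ?_, rfl⟩
        rcases hy0.2 with hya | hyb
        · -- y ≡ a (mod k)
          left
          obtain ⟨j, rfl⟩ := repr_a ha hab hbk hya
          have hXlt : X < k * j + a + 2 * k := hlea hya
          have ej1 : k * (j + 1) = k * j + k := by ring
          have ej2 : k * (j + 2) = k * j + 2 * k := by ring
          have hj : j = h + m' := by
            rcases hr with rfl | rfl
            · -- r₁ = a
              have e1 : j + 1 ≤ h + m' + 1 := by
                refine Nat.le_of_mul_le_mul_left ?_ hk0
                rw [hXval] at hge; linarith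
              have e2 : h + m' + 1 < j + 2 := by
                refine Nat.lt_of_mul_lt_mul_left (a := k) ?_
                rw [hXval] at hXlt; linarith
              omega
            · -- r₁ = b
              have e1 : j + 1 < h + m' + 2 := by
                refine Nat.lt_of_mul_lt_mul_left (a := k) ?_
                have hstr := hgeb hXmod
                rw [hXval] at hstr
                have : k * (h + m' + 2) = k * (h + m' + 1) + k := by ring
                linarith
              have e2 : h + m' + 1 < j + 2 := by
                refine Nat.lt_of_mul_lt_mul_left (a := k) ?_
                rw [hXval] at hXlt; linarith
              omega
          refine ⟨Ht, ?_⟩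
          simp only [List.head?_cons, Option.some_inj]
          rw [hj]; ring
        · -- y ≡ b (mod k)
          right
          obtain ⟨j, rfl⟩ := repr_b ha hab hbk hy0.1 hyb
          have ej1 : k * (j + 1) = k * j + k := by ring
          have ej3 : k * (j + 3) = k * j + 3 * k := by ring
          have hj2 : j + 1 = h + m' := by
            rcases hr with rfl | rfl
            · -- r₁ = a
              have e1 : j + 1 < h + m' + 1 := by
                refine Nat.lt_of_mul_lt_mul_left (a := k) ?_
                rw [hXval] at hge; linarith
              have e2 : h + m' + 1 < j + 3 := by
                refine Nat.lt_of_mul_lt_mul_left (a := k) ?_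
                rw [hXval] at hle; linarith
              omega
            · -- r₁ = b
              have e1 : j + 1 < h + m' + 1 := by
                refine Nat.lt_of_mul_lt_mul_left (a := k) ?_
                have hstr := hgeb hXmod
                rw [hXval] at hstr; linarith
              have e2 : h + m' + 1 < j + 3 := by
                refine Nat.lt_of_mul_lt_mul_left (a := k) ?_
                rw [hXval] at hle; linarith
              omega
          have hh1 : 1 ≤ h := by
            rcases Nat.eq_zero_or_pos h with h0 | h1
            · exfalso
              rw [show m' = j + 1 by omega] at hymin
              linarith
            · exact h1
          refine ⟨Ht, hh1, ?_⟩
          simp only [List.head?_cons, Option.some_inj]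
          rw [show k * (h - 1) + k * m' = k * j from by
            rw [← Nat.mul_add]; congr 1; omega]
  · rintro ⟨t, ht, rfl⟩
    refine ⟨?_, rfl⟩
    rcases ht with ⟨Ht, hhd⟩ | ⟨Ht, hpos, hhd⟩
    · -- tail head ≡ a
      cases t with
      | nil => simp at hhd
      | cons y t2 =>
        simp only [List.head?_cons, Option.some_inj] at hhd
        subst hhd
        obtain ⟨hs, hl, hp, hlast, hc⟩ := Ht
        have hXe : X = k * h + k * m' + k + r₁ := by rw [hX]; ring
        have har : a ≤ r₁ := by rcases hr with rfl | rfl <;> omega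
        have hrb : r₁ ≤ b := by rcases hr with rfl | rfl <;> omega
        have hR1 : k * h + k * m' + a + k ≤ X := by linarith
        have hR2 : X ≤ k * h + k * m' + a + 2 * k := by linarith
        refine ⟨List.pairwise_cons.2 ⟨?_, hs⟩, by simp at hl ⊢; omega, ?_, ?_, ?_⟩
        · intro z hz
          exact le_trans (sorted_head_le hs rfl z hz) (by linarith)
        · intro z hz
          rcases List.mem_cons.1 hz with rfl | hz2
          · refine ⟨lt_of_lt_of_le (show 0 < r₁ by omega) (by rw [hXe]; exact Nat.le_add_left _ _), ?_⟩
            rcases hr with rfl | rfl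
            · exact Or.inl hXmod
            · exact Or.inr hXmod
          · exact hp z hz2
        · rw [getLast?_cons_ne (by simp)]; exact hlast
        · refine List.isChain_cons_cons.2 ⟨⟨⟨hR1, ?_⟩, hR2, ?_⟩, hc⟩
          · intro hbb
            rcases hr with rfl | rfl
            · exact absurd (hXmod.symm.trans hbb) hane
            · linarith
          · intro _
            linarith
    · -- tail head ≡ b
      obtain ⟨h'', rfl⟩ : ∃ h'', h = h'' + 1 := ⟨h - 1, by omega⟩
      simp only [Nat.add_sub_cancel] at hhd
      cases t with
      | nil => simp at hhd
      | cons y t2 =>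
        simp only [List.head?_cons, Option.some_inj] at hhd
        subst hhd
        obtain ⟨hs, hl, hp, hlast, hc⟩ := Ht
        have hXe : X = k * h'' + k * m' + 2 * k + r₁ := by rw [hX]; ring
        have har : a ≤ r₁ := by rcases hr with rfl | rfl <;> omega
        have hrb : r₁ ≤ b := by rcases hr with rfl | rfl <;> omega
        have hymod : (k * h'' + k * m' + b) % k = b % k := by
          rw [show k * h'' + k * m' + b = k * (h'' + m') + b from by ring, Nat.mul_add_mod]
        have hR1 : k * h'' + k * m' + b + k ≤ X := by linarith
        have hR2 : X ≤ k * h'' + k * m' + b + 2 * k := by linarith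
        refine ⟨List.pairwise_cons.2 ⟨?_, hs⟩, by simp at hl ⊢; omega, ?_, ?_, ?_⟩
        · intro z hz
          exact le_trans (sorted_head_le hs rfl z hz) (by linarith)
        · intro z hz
          rcases List.mem_cons.1 hz with rfl | hz2
          · refine ⟨lt_of_lt_of_le (show 0 < r₁ by omega) (by rw [hXe]; exact Nat.le_add_left _ _), ?_⟩
            rcases hr with rfl | rfl
            · exact Or.inl hXmod
            · exact Or.inr hXmod
          · exact hp z hz2
        · rw [getLast?_cons_ne (by simp)]; exact hlast
        · refine List.isChain_cons_cons.2 ⟨⟨⟨hR1, ?_⟩, hR2, ?_⟩, hc⟩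
          · intro hbb
            rcases hr with rfl | rfl
            · exact absurd (hXmod.symm.trans hbb) hane
            · linarith
          · intro hya
            exact absurd (hya.symm.trans hymod) hane

end Decomp
section MainLemma

variable {a b k : ℕ}

private lemma finsum_mem_const_mul {α : Type*} {A : Set α} (hA : A.Finite) (c : ℂ)
    (g : α → ℂ) : ∑ᶠ x ∈ A, c * g x = c * ∑ᶠ x ∈ A, g x := by
  rw [finsum_mem_eq_finite_toFinset_sum _ hA, finsum_mem_eq_finite_toFinset_sum _ hA,
    Finset.mul_sum]

private lemma choose_two_succ (n : ℕ) : (n + 1).choose 2 = n.choose 2 + n := by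
  rw [Nat.choose_succ_succ, Nat.choose_one_right, Nat.add_comm]

private lemma main_lemma (a d k : ℕ) (ha : 1 ≤ a) (hd : 1 ≤ d) (hbk : a + d ≤ k)
    (q u v : ℂ) (hQ : ∀ i : ℕ, 1 - q ^ k * (q ^ k) ^ i ≠ 0) :
    ∀ m, 1 ≤ m → ∀ h : ℕ,
      ({l : List ℕ | memBD a (a + d) k m l ∧
          l.head? = some (k * h + k * (m - 1) + a)}.Finite ∧
        ∑ᶠ l ∈ {l : List ℕ | memBD a (a + d) k m l ∧
            l.head? = some (k * h + k * (m - 1) + a)},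
            u ^ lcount k a l * v ^ lcount k (a + d) l * q ^ l.sum
          = u ^ (m - h) * v ^ h *
              q ^ (k * Nat.choose m 2 + k * Nat.choose (h + 1) 2 + m * a + d * h) *
              gbinom (q ^ k) (m - 1) h) ∧
      ({l : List ℕ | memBD a (a + d) k m l ∧
          l.head? = some (k * h + k * (m - 1) + (a + d))}.Finite ∧
        ∑ᶠ l ∈ {l : List ℕ | memBD a (a + d) k m l ∧
            l.head? = some (k * h + k * (m - 1) + (a + d))},
            u ^ lcount k a l * v ^ lcount k (a + d) l * q ^ l.sum
          = u ^ (m - h - 1) * v ^ (h + 1) *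
              q ^ (k * Nat.choose m 2 + k * Nat.choose (h + 1) 2 + m * a + d * (h + 1)) *
              gbinom (q ^ k) (m - 1) h) := by
  have hab : a < a + d := by omega
  have hane : a % k ≠ (a + d) % k := abne ha hab hbk
  intro m hm
  induction m, hm using Nat.le_induction with
  | base =>
    intro h
    simp only [Nat.sub_self, Nat.mul_zero, Nat.zero_add, Nat.sub_zero]
    have hc12 : Nat.choose 1 2 = 0 := rfl
    rcases Nat.eq_zero_or_pos h with rfl | hpos
    · simp only [Nat.mul_zero, Nat.zero_add, Nat.add_zero]
      have hseta : {l : List ℕ | memBD a (a + d) k 1 l ∧ l.head? = some a} =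
          ({[a]} : Set (List ℕ)) := by
        ext l
        simp only [Set.mem_setOf_eq, Set.mem_singleton_iff, memBD_one ha hab hbk,
          Nat.mul_zero, Nat.zero_add]
        constructor
        · rintro ⟨rfl | rfl, hh⟩
          · rfl
          · simp at hh; omega
        · rintro rfl; exact ⟨Or.inl rfl, rfl⟩
      have hsetb : {l : List ℕ | memBD a (a + d) k 1 l ∧
          l.head? = some (a + d)} = ({[a + d]} : Set (List ℕ)) := by
        ext l
        simp only [Set.mem_setOf_eq, Set.mem_singleton_iff, memBD_one ha hab hbk,
          Nat.mul_zero, Nat.zero_add]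
        constructor
        · rintro ⟨rfl | rfl, hh⟩
          · simp at hh; omega
          · rfl
        · rintro rfl; exact ⟨Or.inr rfl, rfl⟩
      rw [hseta, hsetb]
      have la1 : lcount k a [a] = 1 := by
        simp [lcount_cons, lcount]
      have la2 : lcount k (a + d) [a] = 0 := by
        simp [lcount_cons, lcount, hane]
      have lb1 : lcount k a [a + d] = 0 := by
        simp [lcount_cons, lcount]
        intro hcon
        exact absurd hcon.symm hane
      have lb2 : lcount k (a + d) [a + d] = 1 := by
        simp [lcount_cons, lcount]
      refine ⟨⟨Set.finite_singleton _, ?_⟩, Set.finite_singleton _, ?_⟩ <;>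
        rw [finsum_mem_singleton]
      · rw [la1, la2, gbinom_zero hQ, hc12]
        simp only [List.sum_cons, List.sum_nil]
        ring
      · rw [lb1, lb2, gbinom_zero hQ, hc12]
        simp only [List.sum_cons, List.sum_nil]
        ring
    · -- h ≥ 1 : both sets empty, gbinom = 0
      simp only [Nat.add_zero]
      have hempty : ∀ r : ℕ, a ≤ r → r ≤ a + d →
          {l : List ℕ | memBD a (a + d) k 1 l ∧ l.head? = some (k * h + r)} =
            (∅ : Set (List ℕ)) := by
        intro r hr1 hr2
        ext l
        simp only [Set.mem_setOf_eq, Set.mem_empty_iff_false, iff_false, not_and,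
          memBD_one ha hab hbk]
        rintro (rfl | rfl) <;> simp <;>
          · intro hcon
            have : k * 1 ≤ k * h := Nat.mul_le_mul_left k hpos
            omega
      have hg0 : gbinom (q ^ k) 0 h = 0 := by
        rw [gbinom, if_neg (by omega)]
      rw [hempty a (le_refl _) (by omega), hempty (a + d) (by omega) (le_refl _), hg0]
      refine ⟨⟨Set.finite_empty, ?_⟩, Set.finite_empty, ?_⟩ <;>
        rw [finsum_mem_empty] <;> ring
  | succ m hm ih =>
    intro h
    simp only [Nat.add_sub_cancel]
    have hm1 : 1 ≤ m := hm
    -- the two tail sets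
    have hfin1 : {t : List ℕ | memBD a (a + d) k m t ∧
        t.head? = some (k * h + k * (m - 1) + a)}.Finite := (ih h).1.1
    have hfin2 : {t : List ℕ | memBD a (a + d) k m t ∧ 1 ≤ h ∧
        t.head? = some (k * (h - 1) + k * (m - 1) + (a + d))}.Finite := by
      rcases Nat.eq_zero_or_pos h with rfl | hpos
      · convert Set.finite_empty
        ext t; simp
      · refine Set.Finite.subset (ih (h - 1)).2.1 ?_
        intro t ⟨ht1, _, ht3⟩
        exact ⟨ht1, ht3⟩
    have hdisj : Disjoint
        {t : List ℕ | memBD a (a + d) k m t ∧ t.head? = some (k * h + k * (m - 1) + a)}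
        {t : List ℕ | memBD a (a + d) k m t ∧ 1 ≤ h ∧
          t.head? = some (k * (h - 1) + k * (m - 1) + (a + d))} := by
      rw [Set.disjoint_left]
      rintro t ⟨_, ht⟩ ⟨_, hpos, ht'⟩
      rw [ht] at ht'
      simp only [Option.some_inj] at ht'
      have : k * h = k * (h - 1) + k := by
        rw [show h = (h - 1) + 1 by omega, Nat.add_sub_cancel, Nat.mul_succ]
      omega
    have hfinU := hfin1.union hfin2
    -- key computation, for either residue
    have key : ∀ (r₁ : ℕ) (w : ℂ), (r₁ = a ∧ w = u) ∨ (r₁ = a + d ∧ w = v) →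
        ({l : List ℕ | memBD a (a + d) k (m + 1) l ∧
            l.head? = some (k * h + k * m + r₁)}.Finite ∧
          ∑ᶠ l ∈ {l : List ℕ | memBD a (a + d) k (m + 1) l ∧
              l.head? = some (k * h + k * m + r₁)},
              u ^ lcount k a l * v ^ lcount k (a + d) l * q ^ l.sum
            = (w * q ^ (k * h + k * m + r₁)) *
              ((∑ᶠ t ∈ {t : List ℕ | memBD a (a + d) k m t ∧
                  t.head? = some (k * h + k * (m - 1) + a)},
                  u ^ lcount k a t * v ^ lcount k (a + d) t * q ^ t.sum) +
               (∑ᶠ t ∈ {t : List ℕ | memBD a (a + d) k m t ∧ 1 ≤ h ∧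
                  t.head? = some (k * (h - 1) + k * (m - 1) + (a + d))},
                  u ^ lcount k a t * v ^ lcount k (a + d) t * q ^ t.sum))) := by
      intro r₁ w hrw
      have hr : r₁ = a ∨ r₁ = a + d := by rcases hrw with ⟨h1, _⟩ | ⟨h1, _⟩ <;> omega
      have hdec := BD_decomp ha hab hbk hm1 h r₁ hr
      have hXmod : (k * h + k * m + r₁) % k = r₁ % k := by
        rw [← Nat.mul_add, Nat.mul_add_mod]
      constructor
      · rw [hdec]; exact (hfinU.image _)
      · rw [hdec, finsum_mem_image (List.cons_injective.injOn)]
        have hcongr : ∀ t : List ℕ,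
            u ^ lcount k a ((k * h + k * m + r₁) :: t) *
              v ^ lcount k (a + d) ((k * h + k * m + r₁) :: t) *
              q ^ ((k * h + k * m + r₁) :: t).sum
            = (w * q ^ (k * h + k * m + r₁)) *
              (u ^ lcount k a t * v ^ lcount k (a + d) t * q ^ t.sum) := by
          intro t
          rw [lcount_cons, lcount_cons, List.sum_cons]
          rcases hrw with ⟨rfl, rfl⟩ | ⟨rfl, rfl⟩
          · rw [if_pos hXmod, if_neg (fun hcon => hane (hXmod.symm.trans hcon)),
              pow_add, pow_add, pow_one]
            ring
          · rw [if_neg (fun hcon => hane (hXmod.symm.trans hcon).symm), if_pos hXmod,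
              pow_add, pow_add, pow_one]
            ring
        rw [finsum_mem_congr rfl (fun t _ => hcongr t),
          finsum_mem_const_mul hfinU, finsum_mem_union hdisj hfin1 hfin2]
    have keya := key a u (Or.inl ⟨rfl, rfl⟩)
    have keyb := key (a + d) v (Or.inr ⟨rfl, rfl⟩)
    refine ⟨⟨keya.1, ?_⟩, keyb.1, ?_⟩ <;> rcases Nat.eq_zero_or_pos h with rfl | hpos
    · -- a-part, h = 0
      have hS2 : {t : List ℕ | memBD a (a + d) k m t ∧ 1 ≤ 0 ∧
          t.head? = some (k * (0 - 1) + k * (m - 1) + (a + d))} = ∅ := by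
        ext t; simp
      rw [keya.2, hS2, finsum_mem_empty, (ih 0).1.2, gbinom_zero hQ, gbinom_zero hQ,
        Nat.sub_zero, Nat.sub_zero, choose_two_succ m]
      norm_num
      ring
    · -- a-part, h ≥ 1
      obtain ⟨h'', rfl⟩ : ∃ h'', h = h'' + 1 := ⟨h - 1, by omega⟩
      have hS2 : {t : List ℕ | memBD a (a + d) k m t ∧ 1 ≤ h'' + 1 ∧
          t.head? = some (k * (h'' + 1 - 1) + k * (m - 1) + (a + d))} =
          {t : List ℕ | memBD a (a + d) k m t ∧
            t.head? = some (k * h'' + k * (m - 1) + (a + d))} := by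
        simp only [Nat.add_sub_cancel]
        ext t
        exact ⟨fun ⟨h1, _, h3⟩ => ⟨h1, h3⟩, fun ⟨h1, h3⟩ => ⟨h1, by omega, h3⟩⟩
      rw [keya.2, hS2, (ih (h'' + 1)).1.2, (ih h'').2.2]
      rcases le_or_gt (h'' + 1) m with hle | hbig
      · obtain ⟨e, rfl⟩ : ∃ e, m = h'' + 1 + e := ⟨m - (h'' + 1), by omega⟩
        rw [show h'' + 1 + e - (h'' + 1) = e by omega,
          show h'' + 1 + e - h'' - 1 = e by omega,
          show h'' + 1 + e + 1 - (h'' + 1) = e + 1 by omega,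
          show h'' + 1 + e - 1 = h'' + e by omega,
          show h'' + 1 + e = h'' + e + 1 by omega,
          choose_two_succ (h'' + e + 1), choose_two_succ (h'' + 1),
          gbinom_pascal hQ (h'' + e) h'']
        ring
      · have g1 : gbinom (q ^ k) (m - 1) (h'' + 1) = 0 := by
          rw [gbinom, if_neg (by omega)]
        have g2 : gbinom (q ^ k) (m - 1) h'' = 0 := by
          rw [gbinom, if_neg (by omega)]
        have g3 : gbinom (q ^ k) m (h'' + 1) = 0 := by
          rw [gbinom, if_neg (by omega)]
        rw [g1, g2, g3]
        ring
    · -- b-part, h = 0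
      have hS2 : {t : List ℕ | memBD a (a + d) k m t ∧ 1 ≤ 0 ∧
          t.head? = some (k * (0 - 1) + k * (m - 1) + (a + d))} = ∅ := by
        ext t; simp
      rw [keyb.2, hS2, finsum_mem_empty, (ih 0).1.2, gbinom_zero hQ, gbinom_zero hQ,
        Nat.sub_zero, choose_two_succ m]
      norm_num
      ring
    · -- b-part, h ≥ 1
      obtain ⟨h'', rfl⟩ : ∃ h'', h = h'' + 1 := ⟨h - 1, by omega⟩
      have hS2 : {t : List ℕ | memBD a (a + d) k m t ∧ 1 ≤ h'' + 1 ∧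
          t.head? = some (k * (h'' + 1 - 1) + k * (m - 1) + (a + d))} =
          {t : List ℕ | memBD a (a + d) k m t ∧
            t.head? = some (k * h'' + k * (m - 1) + (a + d))} := by
        simp only [Nat.add_sub_cancel]
        ext t
        exact ⟨fun ⟨h1, _, h3⟩ => ⟨h1, h3⟩, fun ⟨h1, h3⟩ => ⟨h1, by omega, h3⟩⟩
      rw [keyb.2, hS2, (ih (h'' + 1)).1.2, (ih h'').2.2]
      rcases le_or_gt (h'' + 1) m with hle | hbig
      · obtain ⟨e, rfl⟩ : ∃ e, m = h'' + 1 + e := ⟨m - (h'' + 1), by omega⟩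
        rw [show h'' + 1 + e - (h'' + 1) = e by omega,
          show h'' + 1 + e - h'' - 1 = e by omega,
          show h'' + 1 + e + 1 - (h'' + 1) - 1 = e by omega,
          show h'' + 1 + e - 1 = h'' + e by omega,
          show h'' + 1 + e = h'' + e + 1 by omega,
          choose_two_succ (h'' + e + 1), choose_two_succ (h'' + 1),
          gbinom_pascal hQ (h'' + e) h'']
        ring
      · have g1 : gbinom (q ^ k) (m - 1) (h'' + 1) = 0 := by
          rw [gbinom, if_neg (by omega)]
        have g2 : gbinom (q ^ k) (m - 1) h'' = 0 := by
          rw [gbinom, if_neg (by omega)]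
        have g3 : gbinom (q ^ k) m (h'' + 1) = 0 := by
          rw [gbinom, if_neg (by omega)]
        rw [g1, g2, g3]
        ring

end MainLemma

/-- Generating functions for the partitions in `BD_{a,b,k}(m,h,a)` (largest part
`kh+k(m-1)+a`) and `BD_{a,b,k}(m,h,b)` (largest part `kh+k(m-1)+b`). -/
theorem gen_BD_mha (a b k m h : ℕ) (ha : 1 ≤ a) (hab : a < b) (hbk : b ≤ k)
    (hm : 1 ≤ m) (hh : h ≤ m - 1) (q u v : ℂ) (hq : ‖q‖ < 1) :
    (∑ᶠ l ∈ {l : List ℕ | memBD a b k m l ∧ l.head? = some (k * h + k * (m - 1) + a)},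
        u ^ lcount k a l * v ^ lcount k b l * q ^ l.sum
      = u ^ (m - h) * v ^ h *
          q ^ (k * Nat.choose m 2 + k * Nat.choose (h + 1) 2 + m * a + (b - a) * h) *
          gbinom (q ^ k) (m - 1) h)
    ∧ (∑ᶠ l ∈ {l : List ℕ | memBD a b k m l ∧ l.head? = some (k * h + k * (m - 1) + b)},
        u ^ lcount k a l * v ^ lcount k b l * q ^ l.sum
      = u ^ (m - h - 1) * v ^ (h + 1) *
          q ^ (k * Nat.choose m 2 + k * Nat.choose (h + 1) 2 + m * a + (b - a) * (h + 1)) *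
          gbinom (q ^ k) (m - 1) h) := by
  have hQ : ∀ i : ℕ, 1 - q ^ k * (q ^ k) ^ i ≠ 0 := by
    intro i
    have hnorm : ‖q ^ k * (q ^ k) ^ i‖ = ‖q‖ ^ (k + k * i) := by
      rw [norm_mul, norm_pow, norm_pow, norm_pow, ← pow_mul, ← pow_add]
    have hlt : ‖q ^ k * (q ^ k) ^ i‖ < 1 := by
      rw [hnorm]
      exact pow_lt_one₀ (norm_nonneg q) hq (Nat.add_pos_left (show 0 < k by omega) (k * i)).ne'
    intro hcon
    rw [sub_eq_zero] at hcon
    rw [← hcon] at hlt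
    simp at hlt
  obtain ⟨d, rfl⟩ : ∃ d, b = a + d := ⟨b - a, by omega⟩
  simp only [Nat.add_sub_cancel_left]
  have H := main_lemma a d k ha (by omega) hbk q u v hQ m hm h
  exact ⟨H.1.2, H.2.2⟩
end

section
/- For integers a, b, k with k ≥ b > a ≥ 1, m ≥ 2 and 1 ≤ h ≤ m−1: Σ_{λ ∈ BD_{a,b,k}(m+1,h,a)} u^{ℓ_a(λ)} v^{ℓ_b(λ)} q^{|λ|} = u q^{kh+km+a} ( Σ_{λ ∈ BD_{a,b,k}(m,h,a)} u^{ℓ_a(λ)} v^{ℓ_b(λ)} q^{|λ|} + Σ_{λ ∈ BD_{a,b,k}(m,h−1,b)} u^{ℓ_a(λ)} v^{ℓ_b(λ)} q^{|λ|} ). -/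
open List

lemma eq_of_mod_bound {x y k : ℕ} (h : x % k = y % k)
    (h1 : x < y + k) (h2 : y < x + k) : x = y := by
  have hx := Nat.div_add_mod x k
  have hy := Nat.div_add_mod y k
  have hd : x / k = y / k := by
    have l1 : x / k ≤ y / k := by
      by_contra hc
      push_neg at hc
      have h3 : k * (y / k + 1) ≤ k * (x / k) := Nat.mul_le_mul_left k hc
      rw [Nat.mul_add, Nat.mul_one] at h3
      omega
    have l2 : y / k ≤ x / k := by
      by_contra hc
      push_neg at hc
      have h3 : k * (x / k + 1) ≤ k * (y / k) := Nat.mul_le_mul_left k hc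
      rw [Nat.mul_add, Nat.mul_one] at h3
      omega
    omega
  rw [hd] at hx
  omega

lemma BD_cons_iff {a b k n N N₁ N₂ : ℕ} (ha : 1 ≤ a) (hab : a < b) (hbk : b ≤ k)
    (hn : 1 ≤ n) (hN : N % k = a % k) (hN1 : N = N₁ + k) (hN2 : N + b = N₂ + 2 * k + a)
    (l : List ℕ) :
    (memBD a b k (n + 1) l ∧ l.head? = some N) ↔
      ∃ t, ((memBD a b k n t ∧ t.head? = some N₁) ∨
            (memBD a b k n t ∧ t.head? = some N₂)) ∧ l = N :: t := by
  have hak : a % k = a := Nat.mod_eq_of_lt (by omega)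
  have hne : a % k ≠ b % k := by
    rcases eq_or_lt_of_le hbk with rfl | hlt
    · simp [hak]; omega
    · rw [hak, Nat.mod_eq_of_lt hlt]; omega
  have h2 : (N + b) % k = (b + a) % k := by
    rw [Nat.add_mod N b, hN, ← Nat.add_mod, Nat.add_comm a b]
  have hN1k : N₁ % k = a % k := by
    rw [hN1, Nat.add_mod_right] at hN
    exact hN
  have hN2k : N₂ % k = b % k := by
    have h1 : (N₂ + 2 * k + a) % k = (N₂ + a) % k := by
      rw [Nat.add_right_comm, Nat.add_mul_mod_self_right]
    rw [← hN2] at h1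
    have h3 : Nat.ModEq k (N₂ + a) (b + a) := h1.symm.trans h2
    exact Nat.ModEq.add_right_cancel' a h3
  constructor
  · rintro ⟨⟨hsort, hlen, hparts, hlast, hchain⟩, hhead⟩
    rcases l with - | ⟨x, t⟩
    · simp at hhead
    have hx : N = x := by simpa using hhead.symm
    subst hx
    rcases t with - | ⟨c, t'⟩
    · simp at hlen; omega
    rw [Chain', isChain_cons_cons] at hchain
    obtain ⟨⟨⟨hck, hcks⟩, ⟨hc2k, hc2ks⟩⟩, hchain'⟩ := hchain
    have hcparts := hparts c (by simp)
    refine ⟨c :: t', ?_, rfl⟩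
    have hrest : memBD a b k n (c :: t') :=
      ⟨(pairwise_cons.1 hsort).2, by simp only [length_cons] at hlen ⊢; omega,
       fun x hx => hparts x (by simp [hx]),
       by rwa [getLast?_cons_cons] at hlast, hchain'⟩
    rcases hcparts.2 with hca | hcb
    · left
      refine ⟨hrest, ?_⟩
      have : N = c + k := by
        apply eq_of_mod_bound (k := k)
        · rw [hN, ← hca]; simp
        · have := hc2ks hca; omega
        · omega
      simp; omega
    · right
      refine ⟨hrest, ?_⟩
      have : N + b = c + 2 * k + a := by
        apply eq_of_mod_bound (k := k)
        · rw [h2, Nat.add_right_comm c (2 * k) a, Nat.add_mul_mod_self_right,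
            Nat.add_mod c a, hcb, ← Nat.add_mod, Nat.add_comm b a]
        · omega
        · omega
      simp; omega
  · rintro ⟨t, ht, rfl⟩
    have hkpos : 0 < k := by omega
    have key : memBD a b k n t ∧ (t.head? = some N₁ ∨ t.head? = some N₂) := by tauto
    obtain ⟨⟨hsort, hlen, hparts, hlast, hchain⟩, hhead⟩ := key
    rcases t with - | ⟨c, t'⟩
    · rcases hhead with hh | hh <;> simp at hh
    have hc : c = N₁ ∨ c = N₂ := by
      rcases hhead with hh | hh <;> simp only [head?_cons, Option.some.injEq] at hh <;> tauto
    refine ⟨⟨?_, by simp only [length_cons] at hlen ⊢; omega, ?_,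
      by rwa [getLast?_cons_cons], ?_⟩, rfl⟩
    · rw [pairwise_cons]
      refine ⟨fun y hy => ?_, hsort⟩
      rcases mem_cons.1 hy with rfl | hy
      · rcases hc with rfl | rfl <;> omega
      · have h5 := (pairwise_cons.1 hsort).1 y hy
        rcases hc with rfl | rfl <;> omega
    · intro x hx
      rcases mem_cons.1 hx with rfl | hx
      · exact ⟨by omega, Or.inl hN⟩
      · exact hparts x hx
    · rw [Chain', isChain_cons_cons]
      refine ⟨⟨⟨?_, fun hb => absurd (hN.symm.trans hb) hne⟩, ⟨?_, fun _ => ?_⟩⟩, hchain⟩ <;>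
        rcases hc with rfl | rfl <;> omega

lemma finite_memBD_head (a b k m N : ℕ) :
    {l : List ℕ | memBD a b k m l ∧ l.head? = some N}.Finite := by
  apply Set.Finite.subset
    (Set.Finite.image (fun L : List (Fin (N + 1)) => L.map (fun x => x.val))
      (List.finite_length_eq _ m))
  rintro l ⟨⟨hsort, hlen, -⟩, hhead⟩
  have hle : ∀ x ∈ l, x ≤ N := by
    rcases l with - | ⟨y, t⟩
    · simp
    · simp only [List.head?_cons, Option.some.injEq] at hhead
      subst hhead
      intro x hx
      rcases List.mem_cons.1 hx with rfl | hx
      · exact le_refl _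
      · exact (List.pairwise_cons.1 hsort).1 x hx
  refine ⟨l.map (fun x => (⟨min x N, by omega⟩ : Fin (N + 1))), by simpa using hlen, ?_⟩
  dsimp only
  rw [List.map_map]
  refine (List.map_congr_left ?_).trans (List.map_id l)
  intro x hx
  simp [Nat.min_eq_left (hle x hx)]

lemma lcount_cons_of_eq {k c x : ℕ} (t : List ℕ) (hx : x % k = c % k) :
    lcount k c (x :: t) = lcount k c t + 1 := by
  simp [lcount, List.filter_cons, hx]

lemma lcount_cons_of_ne {k c x : ℕ} (t : List ℕ) (hx : ¬ x % k = c % k) :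
    lcount k c (x :: t) = lcount k c t := by
  simp [lcount, List.filter_cons, hx]

/-- Recurrence for the basis `BD_{a,b,k}`: for `m ≥ 2` and `1 ≤ h ≤ m-1`, removing the
largest part `kh+km+a` from a partition in `BD_{a,b,k}(m+1,h,a)` gives
`Σ_{BD(m+1,h,a)} = u q^{kh+km+a} (Σ_{BD(m,h,a)} + Σ_{BD(m,h-1,b)})`. -/
theorem gen_BD_recur (a b k m h : ℕ) (ha : 1 ≤ a) (hab : a < b) (hbk : b ≤ k)
    (hm : 2 ≤ m) (hh1 : 1 ≤ h) (hh2 : h ≤ m - 1) (q u v : ℂ) (hq : ‖q‖ < 1) :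
    ∑ᶠ l ∈ {l : List ℕ | memBD a b k (m + 1) l ∧ l.head? = some (k * h + k * m + a)},
        u ^ lcount k a l * v ^ lcount k b l * q ^ l.sum
      = u * q ^ (k * h + k * m + a) *
          ((∑ᶠ l ∈ {l : List ℕ | memBD a b k m l ∧ l.head? = some (k * h + k * (m - 1) + a)},
              u ^ lcount k a l * v ^ lcount k b l * q ^ l.sum) +
            ∑ᶠ l ∈ {l : List ℕ |
                memBD a b k m l ∧ l.head? = some (k * (h - 1) + k * (m - 1) + b)},
              u ^ lcount k a l * v ^ lcount k b l * q ^ l.sum) := by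
  obtain ⟨m', rfl⟩ : ∃ m', m = m' + 2 := ⟨m - 2, by omega⟩
  obtain ⟨h', rfl⟩ : ∃ h', h = h' + 1 := ⟨h - 1, by omega⟩
  simp only [show m' + 2 - 1 = m' + 1 by omega, show h' + 1 - 1 = h' by omega]
  set N : ℕ := k * (h' + 1) + k * (m' + 2) + a with hNdef
  set N₁ : ℕ := k * (h' + 1) + k * (m' + 1) + a with hN1def
  set N₂ : ℕ := k * h' + k * (m' + 1) + b with hN2def
  have hN1 : N = N₁ + k := by rw [hNdef, hN1def]; ring
  have hN2 : N + b = N₂ + 2 * k + a := by rw [hNdef, hN2def]; ring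
  have hN : N % k = a % k := by
    have e : N = a + k * (h' + 1 + (m' + 2)) := by rw [hNdef]; ring
    rw [e, Nat.add_mul_mod_self_left]
  have hiff := BD_cons_iff (n := m' + 2) (N := N) (N₁ := N₁) (N₂ := N₂)
    ha hab hbk (by omega) hN hN1 hN2
  have hS := finite_memBD_head a b k (m' + 2 + 1) N
  have hT1 := finite_memBD_head a b k (m' + 2) N₁
  have hT2 := finite_memBD_head a b k (m' + 2) N₂
  rw [finsum_mem_eq_finite_toFinset_sum _ hS, finsum_mem_eq_finite_toFinset_sum _ hT1,
    finsum_mem_eq_finite_toFinset_sum _ hT2]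
  have hdisj : Disjoint hT1.toFinset hT2.toFinset := by
    rw [Finset.disjoint_left]
    rintro t ht1 ht2
    rw [Set.Finite.mem_toFinset] at ht1 ht2
    obtain ⟨-, e1⟩ := ht1
    obtain ⟨-, e2⟩ := ht2
    rw [e1] at e2
    have : N₁ = N₂ := by injection e2
    omega
  rw [← Finset.sum_union hdisj, Finset.mul_sum]
  apply Finset.sum_nbij' (i := List.tail) (j := fun t => N :: t)
  · intro l hl
    rw [Set.Finite.mem_toFinset] at hl
    obtain ⟨t, ht, rfl⟩ := (hiff _).1 hl
    rw [Finset.mem_union, Set.Finite.mem_toFinset, Set.Finite.mem_toFinset]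
    simpa using ht
  · intro t ht
    rw [Finset.mem_union, Set.Finite.mem_toFinset, Set.Finite.mem_toFinset] at ht
    rw [Set.Finite.mem_toFinset]
    exact (hiff _).2 ⟨t, ht, rfl⟩
  · intro l hl
    rw [Set.Finite.mem_toFinset] at hl
    obtain ⟨t, ht, rfl⟩ := (hiff _).1 hl
    rfl
  · intro t ht
    rfl
  · intro l hl
    rw [Set.Finite.mem_toFinset] at hl
    obtain ⟨t, ht, rfl⟩ := (hiff _).1 hl
    have hak : a % k = a := Nat.mod_eq_of_lt (by omega)
    have hne : a % k ≠ b % k := by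
      rcases eq_or_lt_of_le hbk with rfl | hlt
      · simp [hak]; omega
      · rw [hak, Nat.mod_eq_of_lt hlt]; omega
    rw [List.tail_cons, lcount_cons_of_eq t hN, lcount_cons_of_ne t (by rw [hN]; exact hne),
      List.sum_cons, pow_succ, pow_add]
    ring
end
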